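/- Suppose B is an observation barrier function (OBF) with level q. Then ℙ(X_{t_i} ∈ O_i for all 1 ≤ i ≤ k, and X_n ∉ U for all n ≤ t_k) ≥ q. -/

import Mathlib

open MeasureTheory

/-- If `B` is an observation barrier function (OBF) with level `q`, then
`ℙ(X_{t_i} ∈ O_i for all i, and X_n ∉ U for all n ≤ t_k) ≥ q`. -/
theorem obf_observation_guarantee
    {Ω : Type*} {m0 : MeasurableSpace Ω} (ℙ : Measure Ω) [IsProbabilityMeasure ℙ]
    (𝓕 : Filtration ℕ m0)
    {𝒳 : Type*} [MeasurableSpace 𝒳]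
    (X : ℕ → Ω → 𝒳) (hX_adapted : ∀ n, Measurable[𝓕 n] (X n))
    (x₀ : 𝒳) (hX0 : ∀ᵐ ω ∂ℙ, X 0 ω = x₀)
    (U : Set 𝒳) (hU : MeasurableSet U)
    (k : ℕ) (t : Fin (k + 1) → ℕ) (ht : StrictMono t)
    (O : Fin (k + 1) → Set 𝒳) (hO : ∀ i, MeasurableSet (O i))
    (B : ℕ → 𝒳 → ℝ)
    (hB_meas : ∀ n, Measurable (B n))
    (hB_bdd : ∀ n, ∃ C : ℝ, ∀ x, |B n x| ≤ C)
    (q : ℝ)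
    -- (i) initial condition
    (h_init : q ≤ B 0 x₀)
    -- (ii) submartingale (drift) condition on the guard set `G n`
    (h_drift : ∀ n ≤ t (Fin.last k), ∀ᵐ ω ∂ℙ,
      (X n ω ∉ U ∧ ∀ i, t i = n → X n ω ∈ O i) →
        B n (X n ω) ≤ (ℙ[fun ω' => B (n + 1) (X (n + 1) ω') | 𝓕 n]) ω)
    -- (iii) nonpositivity outside the guard set
    (h_nonpos : ∀ n ≤ t (Fin.last k), ∀ x : 𝒳,
      ¬(x ∉ U ∧ ∀ i, t i = n → x ∈ O i) → B n x ≤ 0)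
    -- (iv) terminal bound
    (h_term : ∀ x : 𝒳, B (t (Fin.last k) + 1) x ≤ 1) :
    ENNReal.ofReal q ≤
      ℙ {ω | (∀ i, X (t i) ω ∈ O i) ∧ ∀ n ≤ t (Fin.last k), X n ω ∉ U} := by
  classical
  set T := t (Fin.last k) with hTdef
  -- guard sets
  set G : ℕ → Set 𝒳 := fun n => {x | x ∉ U ∧ ∀ i, t i = n → x ∈ O i} with hGdef
  have hG_meas : ∀ n, MeasurableSet (G n) := by
    intro n
    have hEq : G n = Uᶜ ∩ ⋂ i, {x | t i = n → x ∈ O i} := by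
      ext x; simp [hGdef, Set.mem_iInter]
    rw [hEq]
    refine hU.compl.inter (MeasurableSet.iInter fun i => ?_)
    by_cases h : t i = n
    · simpa [h] using (hO i)
    · simp [h]
  -- the process B n (X n)
  set f : ℕ → Ω → ℝ := fun n ω => B n (X n ω) with hfdef
  have hX_m0 : ∀ n, Measurable (X n) := fun n =>
    (hX_adapted n).mono (𝓕.le n) le_rfl
  have hf_meas : ∀ n, Measurable (f n) := fun n => (hB_meas n).comp (hX_m0 n)
  have hf_int : ∀ n, Integrable (f n) ℙ := by
    intro n
    obtain ⟨C, hC⟩ := hB_bdd n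
    refine ⟨(hf_meas n).aestronglyMeasurable, ?_⟩
    exact HasFiniteIntegral.of_bounded (C := C)
      (Filter.Eventually.of_forall fun ω => by
        simpa [Real.norm_eq_abs, hfdef] using hC (X n ω))
  -- survival events
  set A : ℕ → Set Ω := fun n => {ω | ∀ m < n, X m ω ∈ G m} with hAdef
  have hA_meas : ∀ n, MeasurableSet[𝓕 n] (A (n + 1)) := by
    intro n
    have hEq : A (n + 1) = ⋂ m, ⋂ (_ : m < n + 1), X m ⁻¹' G m := by
      ext ω; simp [hAdef, Set.mem_iInter]
    rw [hEq]
    refine MeasurableSet.iInter fun m => MeasurableSet.iInter fun hm => ?_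
    exact ((hX_adapted m).mono (𝓕.mono (Nat.lt_succ_iff.mp hm)) le_rfl) (hG_meas m)
  have hA0 : A 0 = Set.univ := by
    ext ω; simp [hAdef]
  have hA_meas0 : ∀ n, MeasurableSet (A n) := by
    intro n
    cases n with
    | zero => rw [hA0]; exact MeasurableSet.univ
    | succ m => exact (𝓕.le m) _ (hA_meas m)
  -- the stopped-like process
  set Y : ℕ → Ω → ℝ := fun n => (A n).indicator (f n) with hYdef
  have hY_int : ∀ n, Integrable (Y n) ℙ := fun n => (hf_int n).indicator (hA_meas0 n)
  -- drift of Y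
  have key : ∀ n ≤ T, Y n ≤ᵐ[ℙ] ℙ[Y (n + 1) | 𝓕 n] := by
    intro n hn
    have hce : ℙ[Y (n + 1) | 𝓕 n] =ᵐ[ℙ] (A (n + 1)).indicator (ℙ[f (n + 1) | 𝓕 n]) :=
      condExp_indicator (hf_int (n + 1)) (hA_meas n)
    filter_upwards [hce, h_drift n hn] with ω hω hdrift
    rw [hYdef]
    simp only
    rw [hω]
    by_cases hAn : ω ∈ A n
    · by_cases hGn : X n ω ∈ G n
      · have hA1 : ω ∈ A (n + 1) := by
          intro m hm
          rcases Nat.lt_succ_iff_lt_or_eq.mp hm with h | h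
          · exact hAn m h
          · rw [h]; exact hGn
        rw [Set.indicator_of_mem hA1, Set.indicator_of_mem hAn]
        exact hdrift hGn
      · have hA1 : ω ∉ A (n + 1) := fun h => hGn (h n (Nat.lt_succ_self n))
        rw [Set.indicator_of_notMem hA1, Set.indicator_of_mem hAn]
        exact h_nonpos n hn _ hGn
    · have hA1 : ω ∉ A (n + 1) := fun h =>
        hAn (fun m hm => h m (hm.trans (Nat.lt_succ_self n)))
      rw [Set.indicator_of_notMem hA1, Set.indicator_of_notMem hAn]
  -- integrals of Y are nondecreasing
  have hstep : ∀ n ≤ T, ∫ ω, Y n ω ∂ℙ ≤ ∫ ω, Y (n + 1) ω ∂ℙ := by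
    intro n hn
    calc ∫ ω, Y n ω ∂ℙ ≤ ∫ ω, (ℙ[Y (n + 1) | 𝓕 n]) ω ∂ℙ :=
          integral_mono_ae (hY_int n) integrable_condExp (key n hn)
      _ = ∫ ω, Y (n + 1) ω ∂ℙ := integral_condExp (𝓕.le n)
  have hchain : ∫ ω, Y 0 ω ∂ℙ ≤ ∫ ω, Y (T + 1) ω ∂ℙ := by
    have haux : ∀ n, n ≤ T + 1 → ∫ ω, Y 0 ω ∂ℙ ≤ ∫ ω, Y n ω ∂ℙ := by
      intro n
      induction n with
      | zero => intro _; exact le_rfl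
      | succ m ih =>
        intro h
        have hm : m ≤ T := Nat.lt_succ_iff.mp h
        exact (ih (hm.trans (Nat.le_succ T))).trans (hstep m hm)
    exact haux (T + 1) le_rfl
  -- initial bound
  have hq : q ≤ ∫ ω, Y 0 ω ∂ℙ := by
    have hY0 : Y 0 = f 0 := by rw [hYdef]; simp only [hA0, Set.indicator_univ]
    have hint : ∫ ω, Y 0 ω ∂ℙ = B 0 x₀ := by
      rw [hY0]
      have : ∫ ω, f 0 ω ∂ℙ = ∫ _ω, B 0 x₀ ∂ℙ :=
        integral_congr_ae (hX0.mono fun ω h => by simp [hfdef, h])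
      rw [this]; simp
    rw [hint]; exact h_init
  -- terminal bound
  have hterm : ∫ ω, Y (T + 1) ω ∂ℙ ≤ (ℙ (A (T + 1))).toReal := by
    have hle : ∀ ω, Y (T + 1) ω ≤ (A (T + 1)).indicator (fun _ => (1 : ℝ)) ω := by
      intro ω
      by_cases h : ω ∈ A (T + 1)
      · rw [hYdef]; simp only
        rw [Set.indicator_of_mem h, Set.indicator_of_mem h]
        exact h_term (X (T + 1) ω)
      · rw [hYdef]; simp only
        rw [Set.indicator_of_notMem h, Set.indicator_of_notMem h]
    calc ∫ ω, Y (T + 1) ω ∂ℙ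
        ≤ ∫ ω, (A (T + 1)).indicator (fun _ => (1 : ℝ)) ω ∂ℙ :=
          integral_mono (hY_int _) ((integrable_const 1).indicator (hA_meas0 _)) hle
      _ = (ℙ (A (T + 1))).toReal := by
          rw [integral_indicator_const (1 : ℝ) (hA_meas0 _)]; simp; rfl
  -- events comparison
  have hsub : A (T + 1) ⊆
      {ω | (∀ i, X (t i) ω ∈ O i) ∧ ∀ n ≤ t (Fin.last k), X n ω ∉ U} := by
    intro ω h
    refine ⟨fun i => ?_, fun n hn => ?_⟩
    · have hti : t i ≤ T := ht.monotone (Fin.le_last i)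
      exact (h (t i) (Nat.lt_succ_of_le hti)).2 i rfl
    · exact (h n (Nat.lt_succ_of_le hn)).1
  calc ENNReal.ofReal q
      ≤ ENNReal.ofReal ((ℙ (A (T + 1))).toReal) :=
        ENNReal.ofReal_le_ofReal (hq.trans (hchain.trans hterm))
    _ = ℙ (A (T + 1)) := ENNReal.ofReal_toReal (measure_ne_top ℙ _)
    _ ≤ ℙ {ω | (∀ i, X (t i) ω ∈ O i) ∧ ∀ n ≤ t (Fin.last k), X n ω ∉ U} :=
        measure_mono hsub
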